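/- For every connected graph G with at least two edges, rd(G) ≤ rvd(L(G)), where L(G) is the line graph of G. -/

import Mathlib

open SimpleGraph

namespace RD

variable {V : Type*}

/-- `C` is a `u`-`v`-edge-cut of `G`. -/
def IsEdgeCut (G : SimpleGraph V) (C : Finset (Sym2 V)) (u v : V) : Prop :=
  ↑C ⊆ G.edgeSet ∧ ¬ (G.deleteEdges ↑C).Reachable u v

/-- The local edge-connectivity `λ(u,v)`. -/
noncomputable def lam (G : SimpleGraph V) (u v : V) : ℕ :=
  sInf {n | ∃ C : Finset (Sym2 V), IsEdgeCut G C u v ∧ C.card = n}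

/-- The edge-connectivity `λ(G)`. -/
noncomputable def edgeConn (G : SimpleGraph V) : ℕ :=
  sInf {n | ∃ u v : V, u ≠ v ∧ n = lam G u v}

/-- The upper edge-connectivity `λ⁺(G)`. -/
noncomputable def upperEdgeConn (G : SimpleGraph V) : ℕ :=
  sSup {n | ∃ u v : V, u ≠ v ∧ n = lam G u v}

/-- A rainbow disconnection coloring of `G` with `k` colors. -/
def IsRDColoring (G : SimpleGraph V) {k : ℕ} (c : Sym2 V → Fin k) : Prop :=
  ∀ u v : V, u ≠ v → ∃ C : Finset (Sym2 V), IsEdgeCut G C u v ∧ Set.InjOn c ↑C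

/-- The rainbow disconnection number `rd(G)`. -/
noncomputable def rd (G : SimpleGraph V) : ℕ :=
  sInf {k | ∃ c : Sym2 V → Fin k, IsRDColoring G c}

/-- A proper edge-coloring of `G` with `k` colors. -/
def IsProperEdgeColoring (G : SimpleGraph V) {k : ℕ} (c : Sym2 V → Fin k) : Prop :=
  ∀ e₁ ∈ G.edgeSet, ∀ e₂ ∈ G.edgeSet, e₁ ≠ e₂ → (∃ x, x ∈ e₁ ∧ x ∈ e₂) → c e₁ ≠ c e₂

/-- The chromatic index `χ'(G)`. -/
noncomputable def chromIndex (G : SimpleGraph V) : ℕ :=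
  sInf {k | ∃ c : Sym2 V → Fin k, IsProperEdgeColoring G c}

/-- The degree of a vertex. -/
noncomputable def deg (G : SimpleGraph V) (v : V) : ℕ := (G.neighborSet v).ncard

/-- The maximum degree `Δ(G)`. -/
noncomputable def maxDeg (G : SimpleGraph V) : ℕ := sSup (Set.range (deg G))

/-- The minimum degree `δ(G)`. -/
noncomputable def minDeg (G : SimpleGraph V) : ℕ := sInf (Set.range (deg G))

/-- `S` is an `x`-`y`-vertex-cut of `H` (in the sense of rainbow vertex-disconnection). -/
def IsVertexCut (H : SimpleGraph V) (x y : V) (S : Finset V) : Prop :=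
  x ∉ S ∧ y ∉ S ∧
  (H.Adj x y → ∀ p : (H.deleteEdges {s(x, y)}).Walk x y, ∃ w ∈ p.support, w ∈ S) ∧
  (¬ H.Adj x y → ∀ p : H.Walk x y, ∃ w ∈ p.support, w ∈ S)

/-- A rainbow vertex-disconnection coloring of `H` with `k` colors. -/
def IsRVDColoring (H : SimpleGraph V) {k : ℕ} (c : V → Fin k) : Prop :=
  ∀ x y : V, x ≠ y → ∃ S : Finset V, IsVertexCut H x y S ∧
    (H.Adj x y → Set.InjOn c (insert x ↑S) ∨ Set.InjOn c (insert y ↑S)) ∧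
    (¬ H.Adj x y → Set.InjOn c ↑S)

/-- The rainbow vertex-disconnection number `rvd(H)`. -/
noncomputable def rvd (H : SimpleGraph V) : ℕ :=
  sInf {k | ∃ c : V → Fin k, IsRVDColoring H c}

end RD

namespace RDProof

variable {V : Type*} {G : SimpleGraph V}

lemma lg_adj {e₁ e₂ : G.edgeSet} (hne : e₁ ≠ e₂) {a : V} (h₁ : a ∈ (e₁ : Sym2 V))
    (h₂ : a ∈ (e₂ : Sym2 V)) : G.lineGraph.Adj e₁ e₂ := by
  refine ⟨hne, ⟨a, ?_⟩⟩
  simp only [Set.mem_inter_iff, SetLike.mem_coe]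
  exact ⟨h₁, h₂⟩

lemma core (f e₀ : G.edgeSet) :
    ∀ {a w : V} (p : G.Walk a w), w ∈ (f : Sym2 V) → ∀ (e : G.edgeSet), a ∈ (e : Sym2 V) →
    (¬ G.lineGraph.Adj e₀ f ∨
      ((∀ h ∈ p.edges, h ≠ (e₀ : Sym2 V)) ∧ (e = e₀ → a ∉ (f : Sym2 V)))) →
    ∃ q : (G.lineGraph.deleteEdges {s(e₀, f)}).Walk e f,
      ∀ x ∈ q.support, x = e ∨ x = f ∨ (x : Sym2 V) ∈ p.edges := by
  intro a w p
  induction p with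
  | nil =>
    intro hwf e hae hsafe
    by_cases hef : e = f
    · subst hef
      exact ⟨Walk.nil, by simp⟩
    · have hadj : G.lineGraph.Adj e f := lg_adj hef hae hwf
      have hforb : s(e, f) ∉ ({s(e₀, f)} : Set (Sym2 G.edgeSet)) := by
        intro hmem
        rw [Set.mem_singleton_iff, Sym2.eq_iff] at hmem
        rcases hmem with ⟨he, -⟩ | ⟨hef', -⟩
        · rcases hsafe with hsafe | ⟨-, hinv⟩
          · exact hsafe (he ▸ hadj)
          · exact hinv he hwf
        · exact hef hef'
      refine ⟨Walk.cons (by rw [deleteEdges_adj]; exact ⟨hadj, hforb⟩) Walk.nil, ?_⟩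
      intro x hx
      simp only [Walk.support_cons, Walk.support_nil, List.mem_cons, List.mem_singleton] at hx
      rcases hx with rfl | rfl | h
      · exact Or.inl rfl
      · exact Or.inr (Or.inl rfl)
      · exact absurd h (by simp)
  | @cons a b _ hadj p ih =>
    intro hwf e hae hsafe
    have hh' : s(a, b) ∈ G.edgeSet := hadj
    set h' : G.edgeSet := ⟨s(a, b), hh'⟩ with hh'def
    have hbh' : b ∈ (h' : Sym2 V) := Sym2.mem_mk_right a b
    have hmemedges : s(a, b) ∈ (Walk.cons hadj p).edges := by simp
    by_cases hcase : h' = e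
    · have hsafe' : ¬ G.lineGraph.Adj e₀ f ∨
          ((∀ h ∈ p.edges, h ≠ (e₀ : Sym2 V)) ∧ (e = e₀ → b ∉ (f : Sym2 V))) := by
        rcases hsafe with hs | ⟨hne, -⟩
        · exact Or.inl hs
        · refine Or.inr ⟨fun h hmem => hne h (by simp [hmem]), fun heq => ?_⟩
          exact absurd (by rw [show s(a,b) = (h' : Sym2 V) from rfl, hcase, heq])
            (fun hx => hne s(a, b) hmemedges hx)
      obtain ⟨q, hq⟩ := ih hwf e (hcase ▸ hbh') hsafe'
      refine ⟨q, fun x hx => ?_⟩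
      rcases hq x hx with h1 | h1 | h1
      · exact Or.inl h1
      · exact Or.inr (Or.inl h1)
      · exact Or.inr (Or.inr (by simp [h1]))
    · have hsafe' : ¬ G.lineGraph.Adj e₀ f ∨
          ((∀ h ∈ p.edges, h ≠ (e₀ : Sym2 V)) ∧ (h' = e₀ → b ∉ (f : Sym2 V))) := by
        rcases hsafe with hs | ⟨hne, -⟩
        · exact Or.inl hs
        · refine Or.inr ⟨fun h hmem => hne h (by simp [hmem]), fun heq => ?_⟩
          exact absurd (by rw [show s(a,b) = (h' : Sym2 V) from rfl, heq])
            (fun hx => hne s(a, b) hmemedges hx)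
      obtain ⟨q, hq⟩ := ih hwf h' hbh' hsafe'
      have hadjL : G.lineGraph.Adj e h' := lg_adj (Ne.symm hcase) hae (Sym2.mem_mk_left a b)
      have hforb : s(e, h') ∉ ({s(e₀, f)} : Set (Sym2 G.edgeSet)) := by
        intro hmem
        rw [Set.mem_singleton_iff, Sym2.eq_iff] at hmem
        rcases hmem with ⟨he, hh⟩ | ⟨he, hh⟩
        · rcases hsafe with hs | ⟨-, hinv⟩
          · exact hs (he ▸ hh ▸ hadjL)
          · exact hinv he (by rw [← hh]; exact Sym2.mem_mk_left a b)
        · rcases hsafe with hs | ⟨hne, -⟩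
          · exact hs (hh ▸ he ▸ hadjL.symm)
          · exact hne s(a, b) hmemedges (by rw [show s(a,b) = (h' : Sym2 V) from rfl, hh])
      refine ⟨Walk.cons (by rw [deleteEdges_adj]; exact ⟨hadjL, hforb⟩) q, fun x hx => ?_⟩
      rw [Walk.support_cons] at hx
      rcases List.mem_cons.mp hx with rfl | hx'
      · exact Or.inl rfl
      · rcases hq x hx' with h1 | h1 | h1
        · exact Or.inr (Or.inr (by rw [h1]; simp [hh'def]))
        · exact Or.inr (Or.inl h1)
        · exact Or.inr (Or.inr (by simp [h1]))


variable {V : Type*} {G : SimpleGraph V}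

lemma support_mapLe {G G' : SimpleGraph V} (hle : G ≤ G') {u v : V} (p : G.Walk u v) :
    (p.mapLe hle).support = p.support := by
  unfold Walk.mapLe
  rw [Walk.support_map]
  have : ⇑(Hom.ofLE hle) = id := rfl
  rw [this, List.map_id]

lemma walk_head {W : Type*} {H : SimpleGraph W} {x y : W} (hxy : x ≠ y) (p : H.Walk x y) :
    ∃ z, ∃ hz : H.Adj x z, ∃ q : H.Walk z y, p = Walk.cons hz q :=
  Walk.not_nil_iff.mp (Walk.not_nil_of_ne hxy)

lemma exists_rvd {W : Type*} [Fintype W] (H : SimpleGraph W) :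
    ∃ c : W → Fin (Fintype.card W), RD.IsRVDColoring H c := by
  classical
  refine ⟨Fintype.equivFin W, ?_⟩
  intro x y hxy
  refine ⟨Finset.univ \ {x, y}, ⟨by simp, by simp, ?_, ?_⟩, ?_, ?_⟩
  · intro hadj p
    rcases walk_head hxy p with ⟨z, hz, q, rfl⟩
    rw [deleteEdges_adj] at hz
    refine ⟨z, by rw [Walk.support_cons]; exact List.mem_cons_of_mem _ q.start_mem_support, ?_⟩
    simp only [Finset.mem_sdiff, Finset.mem_univ, Finset.mem_insert, Finset.mem_singleton,
      true_and]
    push_neg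
    refine ⟨fun hzx => hz.1.ne (hzx ▸ rfl), fun hzy => ?_⟩
    subst hzy
    exact hz.2 rfl
  · intro hnadj p
    rcases walk_head hxy p with ⟨z, hz, q, rfl⟩
    refine ⟨z, by rw [Walk.support_cons]; exact List.mem_cons_of_mem _ q.start_mem_support, ?_⟩
    simp only [Finset.mem_sdiff, Finset.mem_univ, Finset.mem_insert, Finset.mem_singleton,
      true_and]
    push_neg
    refine ⟨fun hzx => hz.ne (hzx ▸ rfl), fun hzy => hnadj (hzy ▸ hz)⟩
  · intro _
    exact Or.inl ((Fintype.equivFin W).injective.injOn)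
  · intro _
    exact (Fintype.equivFin W).injective.injOn

lemma finite_V (hconn : G.Connected) (hEfin : G.edgeSet.Finite) (hEne : G.edgeSet.Nonempty) :
    Finite V := by
  classical
  have hAdjEx : ∀ x y : V, x ≠ y → ∃ z, G.Adj x z := by
    intro x y hxy
    obtain ⟨p⟩ := hconn x y
    rcases walk_head hxy p with ⟨z, hz, q, rfl⟩
    exact ⟨z, hz⟩
  have hVcov : ∀ x : V, ∃ z, G.Adj x z := by
    obtain ⟨e₁, he₁⟩ := hEne
    induction e₁ using Sym2.ind with
    | _ a b =>
      intro x
      by_cases hxa : x = a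
      · exact ⟨b, hxa ▸ ((G.mem_edgeSet).mp he₁)⟩
      · exact hAdjEx x a hxa
  have huniv : (Set.univ : Set V).Finite := by
    have hsub : (Set.univ : Set V) ⊆ ⋃ e ∈ G.edgeSet, {x | x ∈ e} := by
      intro x _
      obtain ⟨z, hz⟩ := hVcov x
      exact Set.mem_biUnion ((G.mem_edgeSet).mpr hz) (Sym2.mem_mk_left x z)
    refine Set.Finite.subset (Set.Finite.biUnion hEfin ?_) hsub
    intro e _
    induction e using Sym2.ind with
    | _ a b =>
      refine Set.Finite.subset ((Set.finite_singleton b).insert a) ?_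
      intro x hx
      rcases Sym2.mem_iff.mp hx with rfl | rfl <;> simp
  exact Set.finite_univ_iff.mp huniv

end RDProof

open RDProof in
theorem stmt16 {V : Type*} (G : SimpleGraph V) (hconn : G.Connected)
    (h : 2 ≤ G.edgeSet.ncard) :
    RD.rd G ≤ RD.rvd G.lineGraph := by
  classical
  have hEfin : G.edgeSet.Finite := by
    by_contra hinf
    rw [Set.Infinite.ncard hinf] at h
    omega
  have hEne : G.edgeSet.Nonempty := Set.nonempty_of_ncard_ne_zero (by omega)
  have hVfin : Finite V := finite_V hconn hEfin hEne
  haveI : Fintype ↥G.edgeSet := hEfin.fintype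
  have hBne : {k | ∃ c : ↥G.edgeSet → Fin k, RD.IsRVDColoring G.lineGraph c}.Nonempty :=
    ⟨Fintype.card ↥G.edgeSet, exists_rvd G.lineGraph⟩
  obtain ⟨c, hc⟩ := Nat.sInf_mem hBne
  apply Nat.sInf_le
  -- build the edge coloring of G
  set f₀ : ↥G.edgeSet := ⟨hEne.choose, hEne.choose_spec⟩ with hf₀
  set cG : Sym2 V → Fin (sInf {k | ∃ c : ↥G.edgeSet → Fin k, RD.IsRVDColoring G.lineGraph c}) :=
    fun z => if hz : z ∈ G.edgeSet then c ⟨z, hz⟩ else c f₀ with hcG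
  have cG_coe : ∀ z : ↥G.edgeSet, cG ↑z = c z := by
    intro z
    simp only [hcG, z.2, dif_pos, Subtype.coe_eta]
  have hinjOn : ∀ T : Set ↥G.edgeSet, Set.InjOn c T → Set.InjOn cG (Subtype.val '' T) := by
    intro T hT x hx y hy hxy
    obtain ⟨x', hx', rfl⟩ := hx
    obtain ⟨y', hy', rfl⟩ := hy
    rw [cG_coe, cG_coe] at hxy
    exact congrArg Subtype.val (hT hx' hy' hxy)
  have hAdjEx : ∀ x y : V, x ≠ y → ∃ z, G.Adj x z := by
    intro x y hxy
    obtain ⟨p⟩ := hconn x y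
    rcases walk_head hxy p with ⟨z, hz, q, rfl⟩
    exact ⟨z, hz⟩
  refine ⟨cG, ?_⟩
  intro u v huv
  have extract : ∀ C : Finset (Sym2 V), (G.deleteEdges ↑C).Reachable u v →
      ∃ p' : G.Walk u v, ∀ e ∈ p'.edges, e ∉ (C : Set (Sym2 V)) := by
    rintro C ⟨p⟩
    have hsub : ∀ e ∈ p.edges, e ∈ G.edgeSet := by
      intro e he
      have := p.edges_subset_edgeSet he
      rw [edgeSet_deleteEdges] at this
      exact this.1
    refine ⟨p.transfer G hsub, ?_⟩
    rw [Walk.edges_transfer]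
    intro e he
    have := p.edges_subset_edgeSet he
    rw [edgeSet_deleteEdges] at this
    exact this.2
  by_cases hdu : ∀ z, G.Adj u z → z = v
  · have hadjuv : G.Adj u v := by
      obtain ⟨z, hz⟩ := hAdjEx u v huv
      exact (hdu z hz) ▸ hz
    refine ⟨{s(u, v)}, ⟨by simp [hadjuv], ?_⟩, ?_⟩
    · rintro hreach
      obtain ⟨p⟩ := hreach
      rcases walk_head huv p with ⟨z, hz, q, rfl⟩
      rw [deleteEdges_adj] at hz
      exact hz.2 (by simp [hdu z hz.1])
    · intro x hx y hy _
      simp only [Finset.coe_singleton, Set.mem_singleton_iff] at hx hy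
      rw [hx, hy]
  · by_cases hdv : ∀ z, G.Adj v z → z = u
    · have hadjvu : G.Adj v u := by
        obtain ⟨z, hz⟩ := hAdjEx v u (Ne.symm huv)
        exact (hdv z hz) ▸ hz
      refine ⟨{s(u, v)}, ⟨by simp [hadjvu.symm], ?_⟩, ?_⟩
      · rintro hreach
        obtain ⟨p⟩ := hreach.symm
        rcases walk_head (Ne.symm huv) p with ⟨z, hz, q, rfl⟩
        rw [deleteEdges_adj] at hz
        refine hz.2 ?_
        have : z = u := hdv z hz.1
        subst this
        simp [Sym2.eq_swap]
      · intro x hx y hy _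
        simp only [Finset.coe_singleton, Set.mem_singleton_iff] at hx hy
        rw [hx, hy]
    · push_neg at hdu hdv
      obtain ⟨a, haadj, hav⟩ := hdu
      obtain ⟨b, hbadj, hbu⟩ := hdv
      have heE : s(u, a) ∈ G.edgeSet := haadj
      have hfE : s(v, b) ∈ G.edgeSet := hbadj
      set eS : ↥G.edgeSet := ⟨s(u, a), heE⟩ with heS
      set fS : ↥G.edgeSet := ⟨s(v, b), hfE⟩ with hfS
      have hue : u ∈ (eS : Sym2 V) := Sym2.mem_mk_left u a
      have hvf : v ∈ (fS : Sym2 V) := Sym2.mem_mk_left v b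
      have hunf : u ∉ (fS : Sym2 V) := by
        intro hmem
        rcases Sym2.mem_iff.mp hmem with rfl | rfl
        · exact huv rfl
        · exact hbu rfl
      have hvne : v ∉ (eS : Sym2 V) := by
        intro hmem
        rcases Sym2.mem_iff.mp hmem with rfl | rfl
        · exact huv rfl
        · exact hav rfl
      have hSne : eS ≠ fS := by
        intro hEq
        exact hvne (hEq ▸ hvf)
      obtain ⟨S, ⟨hxS, hyS, hcut3, hcut4⟩, hins, hnadjS⟩ := hc eS fS hSne
      by_cases hLadj : G.lineGraph.Adj eS fS
      · rcases hins hLadj with hinj | hinj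
        · -- C = insert eV (image of S)
          refine ⟨insert (s(u, a)) (S.image Subtype.val), ⟨?_, ?_⟩, ?_⟩
          · intro x hx
            simp only [Finset.coe_insert, Set.mem_insert_iff, Finset.coe_image,
              Set.mem_image, Finset.mem_coe] at hx
            rcases hx with rfl | ⟨x', _, rfl⟩
            · exact heE
            · exact x'.2
          · intro hreach
            obtain ⟨p', hp'⟩ := extract _ hreach
            have hmemC : (s(u, a) : Sym2 V) ∈
                ((insert (s(u, a)) (S.image Subtype.val) : Finset (Sym2 V)) : Set (Sym2 V)) := by
              simp
            obtain ⟨q, hq⟩ := core fS eS p' hvf eS hue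
              (Or.inr ⟨fun e he heq => hp' e he (heq ▸ hmemC), fun _ => hunf⟩)
            obtain ⟨x, hxsup, hxmem⟩ := hcut3 hLadj q
            rcases hq x hxsup with rfl | rfl | h1
            · exact hxS hxmem
            · exact hyS hxmem
            · refine hp' _ h1 ?_
              simp only [Finset.coe_insert, Set.mem_insert_iff, Finset.coe_image,
                Set.mem_image, Finset.mem_coe]
              exact Or.inr ⟨x, hxmem, rfl⟩
          · have hcoe : ((insert (s(u, a)) (S.image Subtype.val) : Finset (Sym2 V)) :
                Set (Sym2 V)) = Subtype.val '' (insert eS (S : Set ↥G.edgeSet)) := by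
              rw [Finset.coe_insert, Finset.coe_image, Set.image_insert_eq]
            rw [hcoe]
            exact hinjOn _ hinj
        · -- C = insert fV (image of S)
          refine ⟨insert (s(v, b)) (S.image Subtype.val), ⟨?_, ?_⟩, ?_⟩
          · intro x hx
            simp only [Finset.coe_insert, Set.mem_insert_iff, Finset.coe_image,
              Set.mem_image, Finset.mem_coe] at hx
            rcases hx with rfl | ⟨x', _, rfl⟩
            · exact hfE
            · exact x'.2
          · intro hreach
            obtain ⟨p', hp'⟩ := extract _ hreach
            have hmemC : (s(v, b) : Sym2 V) ∈
                ((insert (s(v, b)) (S.image Subtype.val) : Finset (Sym2 V)) : Set (Sym2 V)) := by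
              simp
            obtain ⟨q, hq⟩ := core eS fS p'.reverse hue fS hvf
              (Or.inr ⟨fun e he heq => by
                  rw [Walk.edges_reverse, List.mem_reverse] at he
                  exact hp' e he (heq ▸ hmemC),
                fun _ => hvne⟩)
            have hcut3' : ∀ r : (G.lineGraph.deleteEdges {s(fS, eS)}).Walk eS fS,
                ∃ w ∈ r.support, w ∈ S := by
              rw [Sym2.eq_swap]
              exact hcut3 hLadj
            obtain ⟨x, hxsup, hxmem⟩ := hcut3' q.reverse
            rw [Walk.support_reverse, List.mem_reverse] at hxsup
            rcases hq x hxsup with rfl | rfl | h1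
            · exact hyS hxmem
            · exact hxS hxmem
            · rw [Walk.edges_reverse, List.mem_reverse] at h1
              refine hp' _ h1 ?_
              simp only [Finset.coe_insert, Set.mem_insert_iff, Finset.coe_image,
                Set.mem_image, Finset.mem_coe]
              exact Or.inr ⟨x, hxmem, rfl⟩
          · have hcoe : ((insert (s(v, b)) (S.image Subtype.val) : Finset (Sym2 V)) :
                Set (Sym2 V)) = Subtype.val '' (insert fS (S : Set ↥G.edgeSet)) := by
              rw [Finset.coe_insert, Finset.coe_image, Set.image_insert_eq]
            rw [hcoe]
            exact hinjOn _ hinj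
      · -- e,f not adjacent in the line graph
        refine ⟨S.image Subtype.val, ⟨?_, ?_⟩, ?_⟩
        · intro x hx
          simp only [Finset.coe_image, Set.mem_image, Finset.mem_coe] at hx
          obtain ⟨x', _, rfl⟩ := hx
          exact x'.2
        · intro hreach
          obtain ⟨p', hp'⟩ := extract _ hreach
          obtain ⟨q, hq⟩ := core fS eS p' hvf eS hue (Or.inl hLadj)
          have hq' := q.mapLe (SimpleGraph.deleteEdges_le _)
          obtain ⟨x, hxsup, hxmem⟩ := hcut4 hLadj (q.mapLe (SimpleGraph.deleteEdges_le _))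
          rw [support_mapLe] at hxsup
          rcases hq x hxsup with rfl | rfl | h1
          · exact hxS hxmem
          · exact hyS hxmem
          · refine hp' _ h1 ?_
            simp only [Finset.coe_image, Set.mem_image, Finset.mem_coe]
            exact ⟨x, hxmem, rfl⟩
        · have hcoe : ((S.image Subtype.val : Finset (Sym2 V)) : Set (Sym2 V)) =
              Subtype.val '' (S : Set ↥G.edgeSet) := Finset.coe_image
          rw [hcoe]
          exact hinjOn _ (hnadjS hLadj)
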